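/- If {α₁, α₂, ..., α_ℓ} ⊆ Φ⁺ is a ℤ-basis of the root lattice Q_Φ and α_i − α_j is not a root for all i < j, then {α₁, α₂, ..., α_ℓ} is the set of simple roots in Φ⁺. -/

import Mathlib

open scoped RealInnerProductSpace

/-- A (reduced) crystallographic root system in a real inner product space. -/
def IsCrystRootSystem {V : Type*} [NormedAddCommGroup V] [InnerProductSpace ℝ V]
    (Φ : Set V) : Prop :=
  Φ.Finite ∧ (∀ α ∈ Φ, α ≠ 0) ∧ (∀ α ∈ Φ, -α ∈ Φ) ∧
  (∀ α ∈ Φ, ∀ c : ℝ, c • α ∈ Φ → c = 1 ∨ c = -1) ∧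
  (∀ α ∈ Φ, ∀ β ∈ Φ, β - (2 * ⟪α, β⟫ / ⟪α, α⟫) • α ∈ Φ) ∧
  (∀ α ∈ Φ, ∀ β ∈ Φ, ∃ n : ℤ, 2 * ⟪α, β⟫ / ⟪α, α⟫ = (n : ℝ))

/-- `Φpos` is a positive system of `Φ`: the roots on the positive side of a linear
functional not vanishing on any root. -/
def IsPositiveSystem {V : Type*} [NormedAddCommGroup V] [InnerProductSpace ℝ V]
    (Φ Φpos : Set V) : Prop :=
  ∃ f : V →ₗ[ℝ] ℝ, (∀ α ∈ Φ, f α ≠ 0) ∧ Φpos = {α ∈ Φ | 0 < f α}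

private lemma inner_self_pos' {V : Type*} [NormedAddCommGroup V] [InnerProductSpace ℝ V]
    {x : V} (hx : x ≠ 0) : (0:ℝ) < ⟪x, x⟫ :=
  lt_of_le_of_ne real_inner_self_nonneg (fun h => hx (inner_self_eq_zero.1 h.symm))

/-- Key lemma: if `a, b` are roots with `⟪a,b⟫ < 0` and `b ≠ -a`, then `a + b` is a root. -/
private lemma key_lemma {V : Type*} [NormedAddCommGroup V] [InnerProductSpace ℝ V]
    {Φ : Set V} (hΦ : IsCrystRootSystem Φ) {a b : V} (ha : a ∈ Φ) (hb : b ∈ Φ)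
    (hab : ⟪a, b⟫ < 0) (hne : b ≠ -a) : a + b ∈ Φ := by
  obtain ⟨hfin, hnz, hneg, hmul, hrefl, hcryst⟩ := hΦ
  have haa : (0:ℝ) < ⟪a, a⟫ := inner_self_pos' (hnz a ha)
  have hbb : (0:ℝ) < ⟪b, b⟫ := inner_self_pos' (hnz b hb)
  obtain ⟨n, hn⟩ := hcryst a ha b hb
  obtain ⟨m, hm⟩ := hcryst b hb a ha
  have hban : ⟪b, a⟫ = ⟪a, b⟫ := real_inner_comm a b
  have hn0 : (n : ℝ) < 0 := by rw [← hn]; exact div_neg_of_neg_of_pos (by linarith) haa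
  have hm0 : (m : ℝ) < 0 := by
    rw [← hm, hban]; exact div_neg_of_neg_of_pos (by linarith) hbb
  have hn1 : n ≤ -1 := by
    have : n < 0 := by exact_mod_cast hn0
    omega
  have hm1 : m ≤ -1 := by
    have : m < 0 := by exact_mod_cast hm0
    omega
  by_cases hcn : n = -1
  · have h1 := hrefl a ha b hb
    rw [hn, hcn] at h1
    simpa [sub_eq_add_neg, add_comm] using h1
  by_cases hcm : m = -1
  · have h1 := hrefl b hb a ha
    rw [hm, hcm] at h1
    simpa [sub_eq_add_neg] using h1
  -- now n ≤ -2 and m ≤ -2, forcing equality in Cauchy-Schwarz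
  exfalso
  have hn2 : n ≤ -2 := by omega
  have hm2 : m ≤ -2 := by omega
  have hcs : ⟪a, b⟫ * ⟪a, b⟫ ≤ ⟪a, a⟫ * ⟪b, b⟫ := real_inner_mul_inner_self_le a b
  have hnm : (n : ℝ) * (m : ℝ) = 4 * (⟪a, b⟫ * ⟪a, b⟫) / (⟪a, a⟫ * ⟪b, b⟫) := by
    rw [← hn, ← hm, hban]; field_simp; ring
  have h4le : (n : ℝ) * m ≤ 4 := by
    rw [hnm, div_le_iff₀ (by positivity)]; nlinarith
  have h4ge : (4:ℝ) ≤ (n:ℝ) * m := by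
    have : (4:ℤ) ≤ n * m := by nlinarith
    exact_mod_cast this
  have heq : ⟪a, b⟫ * ⟪a, b⟫ = ⟪a, a⟫ * ⟪b, b⟫ := by
    have h44 : (n:ℝ) * m = 4 := le_antisymm h4le h4ge
    rw [h44] at hnm
    field_simp at hnm
    linarith
  -- equality case: b is a multiple of a
  set s : ℝ := ⟪a, b⟫ / ⟪a, a⟫ with hs
  have hv : ⟪b - s • a, b - s • a⟫ = 0 := by
    rw [real_inner_sub_sub_self, real_inner_smul_right, real_inner_smul_left,
      real_inner_smul_right, hban, hs]
    field_simp
    nlinarith [heq]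
  have hba : b = s • a := by
    have := inner_self_eq_zero.1 hv
    have := sub_eq_zero.1 this
    exact this
  have hsa : s • a ∈ Φ := hba ▸ hb
  rcases hmul a ha s hsa with h1 | h1
  · rw [h1, one_smul] at hba; rw [hba] at hab; linarith
  · rw [h1, neg_one_smul] at hba; exact hne hba

/-- If `α₁, …, α_ℓ ∈ Φ⁺` form a `ℤ`-basis of the root lattice and `α i - α j ∉ Φ` for
`i < j`, then the `α i` are the simple roots of `Φ⁺`, i.e. every positive root is a
nonnegative integer combination of them. -/
theorem statement1 {V : Type*} [NormedAddCommGroup V] [InnerProductSpace ℝ V]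
    (Φ Φpos : Set V) (hΦ : IsCrystRootSystem Φ) (hpos : IsPositiveSystem Φ Φpos)
    (ℓ : ℕ) (α : Fin ℓ → V) (hα : ∀ i, α i ∈ Φpos)
    (hbasis : ∃ b : Module.Basis (Fin ℓ) ℤ (Submodule.span ℤ Φ), ∀ i, (b i : V) = α i)
    (hdiff : ∀ i j : Fin ℓ, i < j → α i - α j ∉ Φ) :
    ∀ β ∈ Φpos, ∃ c : Fin ℓ → ℕ, β = ∑ i, (c i : ℝ) • α i := by
  obtain ⟨f, hf0, hPos⟩ := hpos
  obtain ⟨b, hb⟩ := hbasis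
  have hnz := hΦ.2.1
  have hneg := hΦ.2.2.1
  have hposmem : ∀ {γ}, γ ∈ Φpos → γ ∈ Φ ∧ 0 < f γ := by
    intro γ h; rw [hPos] at h; exact h
  have hmemQ : ∀ {γ}, γ ∈ Φ → γ ∈ Submodule.span ℤ Φ := fun h => Submodule.subset_span h
  -- coercion of submodule sums
  have hSum : ∀ d : Fin ℓ → ℤ,
      ((∑ i, d i • b i : Submodule.span ℤ Φ) : V) = ∑ i, (d i : ℝ) • α i := by
    intro d
    rw [Submodule.coe_sum]
    apply Finset.sum_congr rfl
    intro i _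
    rw [Submodule.coe_smul, hb, Int.cast_smul_eq_zsmul]
  -- existence of integer coordinates for roots
  have hexist : ∀ γ ∈ Φ, ∃ c : Fin ℓ → ℤ, γ = ∑ i, (c i : ℝ) • α i := by
    intro γ hγ
    refine ⟨fun i => b.repr ⟨γ, hmemQ hγ⟩ i, ?_⟩
    have h1 := b.sum_repr ⟨γ, hmemQ hγ⟩
    have h2 := congrArg (Subtype.val) h1
    rw [hSum] at h2
    exact h2.symm
  -- uniqueness of integer coordinates
  have huniq : ∀ (c d : Fin ℓ → ℤ),
      ∑ i, (c i : ℝ) • α i = ∑ i, (d i : ℝ) • α i → ∀ i, c i = d i := by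
    intro c d h
    have h1 : (∑ i, c i • b i : Submodule.span ℤ Φ) = ∑ i, d i • b i := by
      apply Subtype.ext
      rw [hSum, hSum]; exact h
    have h2 : (∑ i, (c i - d i) • b i : Submodule.span ℤ Φ) = 0 := by
      simp only [sub_smul, Finset.sum_sub_distrib, h1, sub_self]
    have h3 := Fintype.linearIndependent_iff.mp b.linearIndependent _ h2
    intro i; have := h3 i; omega
  -- pairwise differences are never roots
  have hdiff' : ∀ i j, i ≠ j → α i - α j ∉ Φ := by
    intro i j hij h
    rcases lt_or_gt_of_ne hij with h1 | h1
    · exact hdiff i j h1 h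
    · exact hdiff j i h1 (by simpa using hneg _ h)
  -- α is injective
  have hane : ∀ i j : Fin ℓ, α i = α j → i = j := by
    intro i j h
    apply b.injective
    apply Subtype.ext
    rw [hb, hb, h]
  -- pairwise obtuse
  have hobt : ∀ i j, i ≠ j → ⟪α i, α j⟫ ≤ 0 := by
    intro i j hij
    by_contra h
    push_neg at h
    have h1 : ⟪α i, -α j⟫ < 0 := by rw [inner_neg_right]; linarith
    have h2 : -α j ∈ Φ := hneg _ (hposmem (hα j)).1
    have h3 : -α j ≠ -α i := fun hc => hij (hane i j (neg_injective hc).symm)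
    have h4 := key_lemma hΦ (hposmem (hα i)).1 h2 h1 h3
    exact hdiff' i j hij (by simpa [sub_eq_add_neg] using h4)
  -- main induction on the ℓ¹-size of the coefficient vector
  -- sum of a single standard coefficient vector
  have hsingle : ∀ (k : Fin ℓ), ∑ j, (if j = k then (1:ℝ) else 0) • α j = α k := by
    intro k
    rw [Finset.sum_eq_single k (fun j _ hj => by simp [hj])
      (fun h => absurd (Finset.mem_univ k) h)]
    simp
  have main : ∀ n : ℕ, ∀ γ, γ ∈ Φ → 0 < f γ → ∀ c : Fin ℓ → ℤ,
      γ = ∑ i, (c i : ℝ) • α i → ∑ i, (c i).natAbs ≤ n →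
      ∃ d : Fin ℓ → ℕ, γ = ∑ i, (d i : ℝ) • α i := by
    intro n
    induction n with
    | zero =>
      intro γ hγ hfγ c hc hn
      exfalso
      apply hnz γ hγ
      rw [hc]
      apply Finset.sum_eq_zero
      intro i _
      have h0 : (c i).natAbs = 0 :=
        Finset.sum_eq_zero_iff.mp (Nat.le_zero.mp hn) i (Finset.mem_univ i)
      have : c i = 0 := by omega
      simp [this]
    | succ n ih =>
      intro γ hγ hfγ c hc hn
      have hαΦ : ∀ i, α i ∈ Φ := fun i => (hposmem (hα i)).1
      have hfα : ∀ i, 0 < f (α i) := fun i => (hposmem (hα i)).2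
      have hfc : f γ = ∑ i, (c i : ℝ) * f (α i) := by
        rw [hc, map_sum]
        exact Finset.sum_congr rfl fun i _ => by rw [map_smul, smul_eq_mul]
      -- positive/negative part decomposition
      set γp : V := ∑ i, ((max (c i) 0 : ℤ) : ℝ) • α i with hγp
      set γm : V := ∑ i, ((max (-c i) 0 : ℤ) : ℝ) • α i with hγm
      have hdecomp : γ = γp - γm := by
        rw [hc, hγp, hγm, ← Finset.sum_sub_distrib]
        apply Finset.sum_congr rfl
        intro j _
        rw [← sub_smul]
        congr 1
        have h1 : (max (c j) 0) - (max (-c j) 0) = c j := by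
          rcases le_total (c j) 0 with h | h
          · rw [max_eq_right h, max_eq_left (by omega)]; ring
          · rw [max_eq_left h, max_eq_right (by omega)]; ring
        exact_mod_cast h1.symm
      have hfp : 0 < f γp := by
        rw [hγp, map_sum]
        apply Finset.sum_pos'
        · intro i _
          rw [map_smul, smul_eq_mul]
          have h1 : (0:ℝ) ≤ ((max (c i) 0 : ℤ) : ℝ) := by
            exact_mod_cast le_max_right (c i) 0
          exact mul_nonneg h1 (le_of_lt (hfα i))
        · have hex : ∃ i, 0 < c i := by
            by_contra hcon
            push_neg at hcon
            have : f γ ≤ 0 := by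
              rw [hfc]
              apply Finset.sum_nonpos
              intro i _
              have h1 : (c i : ℝ) ≤ 0 := by exact_mod_cast hcon i
              nlinarith [hfα i]
            linarith
          obtain ⟨i, hi⟩ := hex
          refine ⟨i, Finset.mem_univ i, ?_⟩
          rw [map_smul, smul_eq_mul]
          have h1 : (0:ℝ) < ((max (c i) 0 : ℤ) : ℝ) := by
            exact_mod_cast lt_max_iff.2 (Or.inl hi)
          exact mul_pos h1 (hfα i)
      have hγpne : γp ≠ 0 := fun h0 => by rw [h0, map_zero] at hfp; exact lt_irrefl 0 hfp
      have hcross : ⟪γm, γp⟫ ≤ 0 := by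
        rw [hγm, sum_inner]
        apply Finset.sum_nonpos
        intro i _
        rw [real_inner_smul_left, hγp, inner_sum, Finset.mul_sum]
        apply Finset.sum_nonpos
        intro j _
        rw [real_inner_smul_right]
        rcases eq_or_ne i j with rfl | hij
        · rcases le_or_gt (c i) 0 with h1 | h1
          · have h2 : max (c i) 0 = 0 := max_eq_right h1
            simp [h2]
          · have h2 : max (-c i) 0 = 0 := max_eq_right (by omega)
            simp [h2]
        · have h1 : (0:ℝ) ≤ ((max (-c i) 0 : ℤ) : ℝ) := by
            exact_mod_cast le_max_right (-c i) 0
          have h2 : (0:ℝ) ≤ ((max (c j) 0 : ℤ) : ℝ) := by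
            exact_mod_cast le_max_right (c j) 0
          have h3 := hobt i j hij
          have h4 := mul_nonpos_of_nonneg_of_nonpos h2 h3
          nlinarith
      have hγγp : 0 < ⟪γ, γp⟫ := by
        rw [hdecomp, inner_sub_left]
        have := inner_self_pos' hγpne
        linarith
      have hexi : ∃ i, 0 < c i ∧ 0 < ⟪γ, α i⟫ := by
        by_contra hcon
        push_neg at hcon
        have : ⟪γ, γp⟫ ≤ 0 := by
          rw [hγp, inner_sum]
          apply Finset.sum_nonpos
          intro i _
          rw [real_inner_smul_right]
          rcases le_or_gt (c i) 0 with h1 | h1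
          · have h2 : max (c i) 0 = 0 := max_eq_right h1
            simp [h2]
          · have h2 : (0:ℝ) ≤ ((max (c i) 0 : ℤ) : ℝ) := by
              exact_mod_cast le_max_right (c i) 0
            exact mul_nonpos_of_nonneg_of_nonpos h2 (hcon i h1)
        linarith
      obtain ⟨i, hci, hγi⟩ := hexi
      -- case γ = α i : done immediately
      by_cases hγαi : γ = α i
      · refine ⟨fun j => if j = i then 1 else 0, ?_⟩
        rw [hγαi, ← hsingle i]
        exact Finset.sum_congr rfl fun j _ => by by_cases h : j = i <;> simp [h]
      -- otherwise α i - γ is a root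
      have hsub : α i - γ ∈ Φ := by
        have h1 : ⟪α i, -γ⟫ < 0 := by
          rw [inner_neg_right, real_inner_comm]; linarith
        have h2 : -γ ≠ -α i := fun hc => hγαi (neg_injective hc)
        have h3 := key_lemma hΦ (hαΦ i) (hneg γ hγ) h1 h2
        simpa [sub_eq_add_neg] using h3
      set cs : Fin ℓ → ℤ := fun j => (if j = i then 1 else 0) - c j with hcs
      have hrep_sub : α i - γ = ∑ j, ((cs j : ℤ) : ℝ) • α j := by
        have h1 : ∀ j, ((cs j : ℤ) : ℝ) • α j
            = (if j = i then (1:ℝ) else 0) • α j - (c j : ℝ) • α j := by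
          intro j
          rw [← sub_smul]
          simp only [hcs]
          congr 1
          by_cases h : j = i <;> simp [h]
        rw [Finset.sum_congr rfl fun j _ => h1 j, Finset.sum_sub_distrib, hsingle i, ← hc]
      have hsplit : ∀ (k : Fin ℓ) (e : Fin ℓ → ℤ),
          ∑ j, (e j).natAbs = (e k).natAbs + ∑ j ∈ Finset.univ.erase k, (e j).natAbs :=
        fun k e => (Finset.add_sum_erase _ _ (Finset.mem_univ k)).symm
      have hfsub : f (α i - γ) ≠ 0 := hf0 _ hsub
      rcases lt_or_gt_of_ne hfsub with hfneg | hfpos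
      · -- f (γ - α i) > 0 : descend to γ - α i
        have hroot : γ - α i ∈ Φ := by simpa using hneg _ hsub
        have hfroot : 0 < f (γ - α i) := by
          rw [map_sub] at hfneg ⊢
          linarith
        set c' : Fin ℓ → ℤ := fun j => c j - if j = i then 1 else 0 with hc'
        have hrep : γ - α i = ∑ j, ((c' j : ℤ) : ℝ) • α j := by
          have h1 : ∀ j, ((c' j : ℤ) : ℝ) • α j
              = (c j : ℝ) • α j - (if j = i then (1:ℝ) else 0) • α j := by
            intro j
            rw [← sub_smul]
            simp only [hc']
            congr 1
            by_cases h : j = i <;> simp [h]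
          rw [Finset.sum_congr rfl fun j _ => h1 j, Finset.sum_sub_distrib, hsingle i, ← hc]
        have hle : ∑ j, (c' j).natAbs ≤ n := by
          have h2 : c' i = c i - 1 := by simp [hc']
          have herase : ∑ j ∈ Finset.univ.erase i, (c' j).natAbs
              = ∑ j ∈ Finset.univ.erase i, (c j).natAbs := by
            apply Finset.sum_congr rfl
            intro j hj
            have h3 : j ≠ i := Finset.ne_of_mem_erase hj
            simp [hc', h3]
          rw [hsplit i c', herase, h2]
          rw [hsplit i c] at hn
          omega
        obtain ⟨d, hd⟩ := ih (γ - α i) hroot hfroot _ hrep hle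
        refine ⟨fun j => d j + if j = i then 1 else 0, ?_⟩
        have h1 : ∀ j, (((d j + if j = i then 1 else 0 : ℕ)) : ℝ) • α j
            = (d j : ℝ) • α j + (if j = i then (1:ℝ) else 0) • α j := by
          intro j
          rw [← add_smul]
          congr 1
          by_cases h : j = i <;> simp [h]
        rw [Finset.sum_congr rfl fun j _ => h1 j, Finset.sum_add_distrib, hsingle i, ← hd]
        abel
      · -- f (α i - γ) > 0 : the hard case
        have hle : ∑ j, (cs j).natAbs ≤ n := by
          have h2 : cs i = 1 - c i := by simp [hcs]
          have herase : ∑ j ∈ Finset.univ.erase i, (cs j).natAbs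
              = ∑ j ∈ Finset.univ.erase i, (c j).natAbs := by
            apply Finset.sum_congr rfl
            intro j hj
            have h3 : j ≠ i := Finset.ne_of_mem_erase hj
            simp [hcs, h3]
          rw [hsplit i cs, herase, h2]
          rw [hsplit i c] at hn
          omega
        obtain ⟨d, hd⟩ := ih (α i - γ) hsub hfpos _ hrep_sub hle
        have hcd : ∀ j, cs j = (d j : ℤ) := by
          apply huniq
          rw [← hrep_sub, hd]
          apply Finset.sum_congr rfl
          intro j _
          norm_cast
        have hdi : d i = 0 := by
          have h1 := hcd i
          simp [hcs] at h1
          omega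
        exfalso
        have hsubne : α i - γ ≠ 0 := hnz _ hsub
        have hinner1 : ⟪α i - γ, α i⟫ ≤ 0 := by
          rw [hd, sum_inner]
          apply Finset.sum_nonpos
          intro j _
          rw [real_inner_smul_left]
          rcases eq_or_ne j i with rfl | hji
          · simp [hdi]
          · have h1 : (0:ℝ) ≤ (d j : ℝ) := by positivity
            exact mul_nonpos_of_nonneg_of_nonpos h1 (hobt j i hji)
        have hinner2 : ⟪α i - γ, γ⟫ < 0 := by
          have h1 : ⟪α i - γ, γ⟫ = ⟪α i - γ, α i⟫ - ⟪α i - γ, α i - γ⟫ := by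
            rw [← inner_sub_right, sub_sub_cancel]
          rw [h1]
          have := inner_self_pos' hsubne
          linarith
        have hexj : ∃ j, 0 < d j ∧ ⟪γ, α j⟫ < 0 := by
          by_contra hcon
          push_neg at hcon
          have : 0 ≤ ⟪α i - γ, γ⟫ := by
            rw [real_inner_comm, hd, inner_sum]
            apply Finset.sum_nonneg
            intro j _
            rw [real_inner_smul_right]
            rcases Nat.eq_zero_or_pos (d j) with h1 | h1
            · simp [h1]
            · have h2 : (0:ℝ) ≤ (d j : ℝ) := by positivity
              exact mul_nonneg h2 (hcon j h1)
          linarith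
        obtain ⟨j, hdj, hγj⟩ := hexj
        have hji : j ≠ i := fun hcon => by rw [hcon, hdi] at hdj; exact lt_irrefl 0 hdj
        have hadd : α j + γ ∈ Φ := by
          apply key_lemma hΦ (hαΦ j) hγ
          · rw [real_inner_comm]; exact hγj
          · intro hcon
            rw [hcon, map_neg] at hfγ
            have := hfα j
            linarith
        have hfadd : 0 < f (α j + γ) := by
          rw [map_add]
          have := hfα j
          linarith
        set ca : Fin ℓ → ℤ := fun k => c k + if k = j then 1 else 0 with hca
        have hrep_add : α j + γ = ∑ k, ((ca k : ℤ) : ℝ) • α k := by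
          have h1 : ∀ k, ((ca k : ℤ) : ℝ) • α k
              = (c k : ℝ) • α k + (if k = j then (1:ℝ) else 0) • α k := by
            intro k
            rw [← add_smul]
            simp only [hca]
            congr 1
            by_cases h : k = j <;> simp [h]
          rw [Finset.sum_congr rfl fun k _ => h1 k, Finset.sum_add_distrib, hsingle j, ← hc,
            add_comm]
        have hle2 : ∑ k, (ca k).natAbs ≤ n := by
          have h2 : ca j = c j + 1 := by simp [hca]
          have herase : ∑ k ∈ Finset.univ.erase j, (ca k).natAbs
              = ∑ k ∈ Finset.univ.erase j, (c k).natAbs := by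
            apply Finset.sum_congr rfl
            intro k hk
            have h3 : k ≠ j := Finset.ne_of_mem_erase hk
            simp [hca, h3]
          rw [hsplit j ca, herase, h2]
          rw [hsplit j c] at hn
          have hcj := hcd j
          simp [hcs, hji] at hcj
          omega
        obtain ⟨d', hd'⟩ := ih (α j + γ) hadd hfadd _ hrep_add hle2
        have hcd' : ∀ k, ca k = (d' k : ℤ) := by
          apply huniq
          rw [← hrep_add, hd']
          apply Finset.sum_congr rfl
          intro k _
          norm_cast
        have hdeq : ∀ k, (d k : ℤ) = if k = j then 1 else 0 := by
          intro k
          have h1 := hcd k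
          have h2 := hcd' k
          rcases eq_or_ne k j with rfl | hkj
          · simp [hcs, hca, hji] at h1 h2 ⊢
            omega
          · rcases eq_or_ne k i with rfl | hki
            · simp [hdi, hkj]
            · simp [hcs, hca, hki, hkj] at h1 h2 ⊢
              omega
        have hfinal : α i - γ = α j := by
          rw [hd, ← hsingle j]
          apply Finset.sum_congr rfl
          intro k _
          congr 1
          have h1 := hdeq k
          by_cases h : k = j
          · simp [h] at h1 ⊢
            exact_mod_cast h1
          · simp [h] at h1 ⊢
            exact_mod_cast h1
        have hγeq : γ = α i - α j := by
          rw [← hfinal]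
          abel
        exact hdiff' i j (fun hcon => hji hcon.symm) (hγeq ▸ hγ)
  intro β hβ
  obtain ⟨hβΦ, hfβ⟩ := hposmem hβ
  obtain ⟨c, hc⟩ := hexist β hβΦ
  exact main (∑ i, (c i).natAbs) β hβΦ hfβ c hc le_rfl
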